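/- Let S_1, S_2, …, S_m be subsets of N = {1,…,n}. Then the subgroup Q_{S_1} ∩ Q_{S_2} ∩ … ∩ Q_{S_m} of the pure braid group P_n is generated by the set of monic commutators x such that σ(x) ∩ S_i ≠ ∅ for all 1 ≤ i ≤ m. -/

import Mathlib

/-!
Common setup: the pure braid group `P_n` as a presented group, the subgroups
`P_S` and `Q_S`, the characterization of the homomorphisms `φ_S`, the support
`σ(x)`, and monic commutators.
-/

/-- The free-group generator corresponding to the pure braid generator
`p_{a,b}` for `a < b` (indices in `Fin n`, so strand `i+1` of `{1,…,n}`
corresponds to `i : Fin n`). -/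
def pf {n : ℕ} (a b : Fin n) (h : a < b) :
    FreeGroup {q : Fin n × Fin n // q.1 < q.2} :=
  FreeGroup.of ⟨(a, b), h⟩

/-- The defining relations (A), (B), (C) of the pure braid group `P_n`,
each written in the form `lhs⁻¹ * rhs` for an equation `lhs = rhs`. -/
def braidRels (n : ℕ) : Set (FreeGroup {q : Fin n × Fin n // q.1 < q.2}) :=
  -- (A) first equality: p_{a,b} p_{a,c} p_{b,c} = p_{a,c} p_{b,c} p_{a,b}
  {r | ∃ (a b c : Fin n) (hab : a < b) (hbc : b < c),
      r = (pf a b hab * pf a c (hab.trans hbc) * pf b c hbc)⁻¹ *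
          (pf a c (hab.trans hbc) * pf b c hbc * pf a b hab)} ∪
  -- (A) second equality: p_{a,b} p_{a,c} p_{b,c} = p_{b,c} p_{a,b} p_{a,c}
  {r | ∃ (a b c : Fin n) (hab : a < b) (hbc : b < c),
      r = (pf a b hab * pf a c (hab.trans hbc) * pf b c hbc)⁻¹ *
          (pf b c hbc * pf a b hab * pf a c (hab.trans hbc))} ∪
  -- (B) first: p_{a,b} p_{c,d} = p_{c,d} p_{a,b}
  {r | ∃ (a b c d : Fin n) (hab : a < b) (hbc : b < c) (hcd : c < d),
      r = (pf a b hab * pf c d hcd)⁻¹ * (pf c d hcd * pf a b hab)} ∪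
  -- (B) second: p_{a,d} p_{b,c} = p_{b,c} p_{a,d}
  {r | ∃ (a b c d : Fin n) (hab : a < b) (hbc : b < c) (hcd : c < d),
      r = (pf a d (hab.trans (hbc.trans hcd)) * pf b c hbc)⁻¹ *
          (pf b c hbc * pf a d (hab.trans (hbc.trans hcd)))} ∪
  -- (C): p_{a,c} (p_{b,c}⁻¹ p_{b,d} p_{b,c}) = (p_{b,c}⁻¹ p_{b,d} p_{b,c}) p_{a,c}
  {r | ∃ (a b c d : Fin n) (hab : a < b) (hbc : b < c) (hcd : c < d),
      r = (pf a c (hab.trans hbc) * ((pf b c hbc)⁻¹ * pf b d (hbc.trans hcd) * pf b c hbc))⁻¹ *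
          ((pf b c hbc)⁻¹ * pf b d (hbc.trans hcd) * pf b c hbc * pf a c (hab.trans hbc))}

/-- The pure braid group `P_n`, given by the presentation above. -/
abbrev PB (n : ℕ) := PresentedGroup (braidRels n)

/-- The generator `p_{a,b}` of the pure braid group, for `a < b`. -/
def p {n : ℕ} (a b : Fin n) (h : a < b) : PB n := PresentedGroup.of ⟨(a, b), h⟩

/-- `P_S`: the subgroup of `P_n` generated by all `p_{a,b}` with `a ∈ S` and `b ∈ S`. -/
def PS {n : ℕ} (S : Set (Fin n)) : Subgroup (PB n) :=
  Subgroup.closure {x | ∃ (a b : Fin n) (h : a < b), a ∈ S ∧ b ∈ S ∧ x = p a b h}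

/-- `Q_S`: the subgroup of `P_n` generated by all `p_{a,b}` with `a ∈ S` or `b ∈ S`. -/
def QS {n : ℕ} (S : Set (Fin n)) : Subgroup (PB n) :=
  Subgroup.closure {x | ∃ (a b : Fin n) (h : a < b), (a ∈ S ∨ b ∈ S) ∧ x = p a b h}

/-- `IsPhi S φ` says that `φ : P_n → P_n` is the homomorphism `φ_S`, i.e. it sends
`p_{a,b}` to itself if `a ∉ S` and `b ∉ S`, and to `1` otherwise. -/
def IsPhi {n : ℕ} (S : Set (Fin n)) (φ : PB n →* PB n) : Prop :=
  ∀ (a b : Fin n) (h : a < b),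
    (a ∉ S ∧ b ∉ S → φ (p a b h) = p a b h) ∧ ((a ∈ S ∨ b ∈ S) → φ (p a b h) = 1)

/-- The support `σ(x)` of `x ∈ P_n`: the intersection of all `S` with `x ∈ P_S`. -/
def support {n : ℕ} (x : PB n) : Set (Fin n) := ⋂₀ {S | x ∈ PS S}

/-- Monic commutators: the smallest set of elements of `P_n` containing all
`p_{a,b}` and `p_{a,b}⁻¹` and closed under taking nontrivial commutators
`[x,y] = x⁻¹ y⁻¹ x y`. -/
inductive IsMonic {n : ℕ} : PB n → Prop
  | of (a b : Fin n) (h : a < b) : IsMonic (p a b h)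
  | inv (a b : Fin n) (h : a < b) : IsMonic (p a b h)⁻¹
  | comm (x y : PB n) : IsMonic x → IsMonic y → x⁻¹ * y⁻¹ * x * y ≠ 1 →
      IsMonic (x⁻¹ * y⁻¹ * x * y)


section TripleTable
variable {G : Type*} [Group G] {A B C : G}

lemma conj_eq_of_commute {x y : G} (h : Commute x y) : x * y * x⁻¹ = y := by
  rw [h.eq]; group

lemma conj_eq_of_commute' {x y : G} (h : Commute x y) : x⁻¹ * y * x = y := by
  rw [mul_assoc, ← h.eq]; group

variable (h1 : A*B*C = B*C*A) (h2 : A*B*C = C*A*B)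
include h1 h2

set_option linter.unusedSectionVars false

lemma cA : Commute A (B*C) := by
  unfold Commute SemiconjBy
  calc A*(B*C) = A*B*C := by group
    _ = B*C*A := h1
    _ = (B*C)*A := by group

lemma cC : Commute C (A*B) := by
  unfold Commute SemiconjBy
  calc C*(A*B) = C*A*B := by group
    _ = A*B*C := h2.symm
    _ = (A*B)*C := by group

lemma cB : Commute B (C*A) := by
  unfold Commute SemiconjBy
  calc B*(C*A) = B*C*A := by group
    _ = C*A*B := (h1.symm.trans h2)
    _ = (C*A)*B := by group

lemma gt1 : A⁻¹*C*A = B*C*B⁻¹ := by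
  calc A⁻¹*C*A = A⁻¹*(C*A*B)*B⁻¹ := by group
    _ = A⁻¹*(A*B*C)*B⁻¹ := by rw [← h2]
    _ = B*C*B⁻¹ := by group

lemma gt2 : C⁻¹*B*C = A*B*A⁻¹ := by
  have e : B*C*A = C*A*B := h1.symm.trans h2
  calc C⁻¹*B*C = C⁻¹*(B*C*A)*A⁻¹ := by group
    _ = C⁻¹*(C*A*B)*A⁻¹ := by rw [e]
    _ = A*B*A⁻¹ := by group

lemma gt3 : B⁻¹*A*B = C*A*C⁻¹ := by
  calc B⁻¹*A*B = B⁻¹*(A*B*C)*C⁻¹ := by group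
    _ = B⁻¹*(B*C*A)*C⁻¹ := by rw [h1]
    _ = C*A*C⁻¹ := by group

lemma gt5 : A*C*A⁻¹ = C⁻¹*B⁻¹*C*B*C := by
  calc A*C*A⁻¹ = (A*B*A⁻¹)⁻¹ * (A*(B*C)*A⁻¹) := by group
    _ = (C⁻¹*B*C)⁻¹ * (B*C) := by rw [← gt2 h1 h2, conj_eq_of_commute (cA h1 h2)]
    _ = C⁻¹*B⁻¹*C*B*C := by group

lemma gt6 : A⁻¹*B*A = B*C*B*C⁻¹*B⁻¹ := by
  calc A⁻¹*B*A = (A⁻¹*(B*C)*A) * (A⁻¹*C*A)⁻¹ := by group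
    _ = (B*C) * (B*C*B⁻¹)⁻¹ := by rw [conj_eq_of_commute' (cA h1 h2), gt1 h1 h2]
    _ = B*C*B*C⁻¹*B⁻¹ := by group

lemma gt10 : C⁻¹*A*C = A*B*A*B⁻¹*A⁻¹ := by
  calc C⁻¹*A*C = (C⁻¹*(A*B)*C) * (C⁻¹*B*C)⁻¹ := by group
    _ = (A*B) * (A*B*A⁻¹)⁻¹ := by rw [conj_eq_of_commute' (cC h1 h2), gt2 h1 h2]
    _ = A*B*A*B⁻¹*A⁻¹ := by group

lemma gt11 : C*B*C⁻¹ = B⁻¹*A⁻¹*B*A*B := by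
  calc C*B*C⁻¹ = (C*A*C⁻¹)⁻¹ * (C*(A*B)*C⁻¹) := by group
    _ = (B⁻¹*A*B)⁻¹ * (A*B) := by rw [← gt3 h1 h2, conj_eq_of_commute (cC h1 h2)]
    _ = B⁻¹*A⁻¹*B*A*B := by group

lemma gt8 : B⁻¹*C*B = C*A*C*A⁻¹*C⁻¹ := by
  calc B⁻¹*C*B = (B⁻¹*(C*A)*B) * (B⁻¹*A*B)⁻¹ := by group
    _ = (C*A) * (C*A*C⁻¹)⁻¹ := by rw [conj_eq_of_commute' (cB h1 h2), gt3 h1 h2]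
    _ = C*A*C*A⁻¹*C⁻¹ := by group

lemma gt7 : B*A*B⁻¹ = A⁻¹*C⁻¹*A*C*A := by
  calc B*A*B⁻¹ = (B*C*B⁻¹)⁻¹ * (B*(C*A)*B⁻¹) := by group
    _ = (A⁻¹*C*A)⁻¹ * (C*A) := by rw [← gt1 h1 h2, conj_eq_of_commute (cB h1 h2)]
    _ = A⁻¹*C⁻¹*A*C*A := by group

end TripleTable

namespace PBL
variable {n : ℕ}

lemma mk_rel {r : FreeGroup {q : Fin n × Fin n // q.1 < q.2}} (hr : r ∈ braidRels n) :
    PresentedGroup.mk (braidRels n) r = 1 :=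
  (QuotientGroup.eq_one_iff r).mpr (Subgroup.subset_normalClosure hr)

lemma mk_pf {a b : Fin n} (h : a < b) :
    PresentedGroup.mk (braidRels n) (pf a b h) = p a b h := rfl

lemma relA1 {a b c : Fin n} (hab : a < b) (hbc : b < c) :
    p a b hab * p a c (hab.trans hbc) * p b c hbc
      = p a c (hab.trans hbc) * p b c hbc * p a b hab := by
  have h := mk_rel (n := n) (Or.inl (Or.inl (Or.inl (Or.inl ⟨a, b, c, hab, hbc, rfl⟩))))
  simp only [map_mul, map_inv, mk_pf] at h
  exact inv_mul_eq_one.mp h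

lemma relA2 {a b c : Fin n} (hab : a < b) (hbc : b < c) :
    p a b hab * p a c (hab.trans hbc) * p b c hbc
      = p b c hbc * p a b hab * p a c (hab.trans hbc) := by
  have h := mk_rel (n := n) (Or.inl (Or.inl (Or.inl (Or.inr ⟨a, b, c, hab, hbc, rfl⟩))))
  simp only [map_mul, map_inv, mk_pf] at h
  exact inv_mul_eq_one.mp h

lemma relB1 {a b c d : Fin n} (hab : a < b) (hbc : b < c) (hcd : c < d) :
    Commute (p a b hab) (p c d hcd) := by
  have h := mk_rel (n := n) (Or.inl (Or.inl (Or.inr ⟨a, b, c, d, hab, hbc, hcd, rfl⟩)))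
  simp only [map_mul, map_inv, mk_pf] at h
  exact inv_mul_eq_one.mp h

lemma relB2 {a b c d : Fin n} (hab : a < b) (hbc : b < c) (hcd : c < d) :
    Commute (p a d (hab.trans (hbc.trans hcd))) (p b c hbc) := by
  have h := mk_rel (n := n) (Or.inl (Or.inr ⟨a, b, c, d, hab, hbc, hcd, rfl⟩))
  simp only [map_mul, map_inv, mk_pf] at h
  exact inv_mul_eq_one.mp h

lemma relC {a b c d : Fin n} (hab : a < b) (hbc : b < c) (hcd : c < d) :
    Commute (p a c (hab.trans hbc))
      ((p b c hbc)⁻¹ * p b d (hbc.trans hcd) * p b c hbc) := by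
  have h := mk_rel (n := n) (Or.inr ⟨a, b, c, d, hab, hbc, hcd, rfl⟩)
  simp only [map_mul, map_inv, mk_pf] at h
  exact inv_mul_eq_one.mp h

lemma mem_QS {S : Set (Fin n)} {a b : Fin n} (h : a < b) (hS : a ∈ S ∨ b ∈ S) :
    p a b h ∈ QS S :=
  Subgroup.subset_closure ⟨a, b, h, hS, rfl⟩

lemma conj_mem_closure {T : Set (PB n)} {t : PB n}
    (hgen : ∀ g ∈ T, t * g * t⁻¹ ∈ Subgroup.closure T) :
    ∀ {h : PB n}, h ∈ Subgroup.closure T → t * h * t⁻¹ ∈ Subgroup.closure T := by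
  intro h hh
  have hle : Subgroup.closure T ≤
      (Subgroup.closure T).comap (MulAut.conj t).toMonoidHom := by
    rw [Subgroup.closure_le]
    intro g hg
    simpa [Subgroup.mem_comap, MulAut.conj_apply] using hgen g hg
  simpa [Subgroup.mem_comap, MulAut.conj_apply] using hle hh

end PBL

namespace PBL
variable {n : ℕ}

/-- Interleaved case 1: conjugating `p q2 q4` by `p q1 q3`. -/
lemma conj_mem_inter1 (S : Set (Fin n)) {q1 q2 q3 q4 : Fin n}
    (h12 : q1 < q2) (h23 : q2 < q3) (h34 : q3 < q4)
    (hS : q2 ∈ S ∨ q4 ∈ S) :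
    p q1 q3 (h12.trans h23) * p q2 q4 (h23.trans h34) * (p q1 q3 (h12.trans h23))⁻¹ ∈ QS S ∧
    (p q1 q3 (h12.trans h23))⁻¹ * p q2 q4 (h23.trans h34) * p q1 q3 (h12.trans h23) ∈ QS S := by
  set t := p q1 q3 (h12.trans h23) with hT
  set g := p q2 q4 (h23.trans h34) with hG
  set E := p q2 q3 h23 with hE
  set A' := p q1 q2 h12 with hA'
  set x1 := p q1 q4 (h12.trans (h23.trans h34)) with hx1
  set x3 := p q3 q4 h34 with hx3
  -- the key commutation from relation (C)
  have hcomm : Commute t (E⁻¹ * g * E) := relC h12 h23 h34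
  -- triple (q1,q2,q3):  A = A', B = t, C = E
  have e1 : A' * t * E = t * E * A' := relA1 h12 h23
  have e2 : A' * t * E = E * A' * t := relA2 h12 h23
  -- triple (q2,q3,q4):  A = E, B = g, C = x3
  have f1 : E * g * x3 = g * x3 * E := relA1 h23 h34
  have f2 : E * g * x3 = x3 * E * g := relA2 h23 h34
  -- triple (q1,q2,q4):  A = A', B = x1, C = g
  have k1 : A' * x1 * g = x1 * g * A' := relA1 h12 (h23.trans h34)
  have k2 : A' * x1 * g = g * A' * x1 := relA2 h12 (h23.trans h34)
  -- main decomposition, both signs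
  have dec1 : t⁻¹ * g * t = (t⁻¹*E*t) * (E⁻¹*g*E) * (t⁻¹*E*t)⁻¹ := by
    calc t⁻¹ * g * t = (t⁻¹*E*t) * (t⁻¹*(E⁻¹*g*E)*t) * (t⁻¹*E*t)⁻¹ := by group
      _ = (t⁻¹*E*t) * (E⁻¹*g*E) * (t⁻¹*E*t)⁻¹ := by rw [conj_eq_of_commute' hcomm]
  have dec2 : t * g * t⁻¹ = (t*E*t⁻¹) * (E⁻¹*g*E) * (t*E*t⁻¹)⁻¹ := by
    calc t * g * t⁻¹ = (t*E*t⁻¹) * (t*(E⁻¹*g*E)*t⁻¹) * (t*E*t⁻¹)⁻¹ := by group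
      _ = (t*E*t⁻¹) * (E⁻¹*g*E) * (t*E*t⁻¹)⁻¹ := by rw [conj_eq_of_commute hcomm]
  have w1 : t⁻¹*E*t = E*A'*E*A'⁻¹*E⁻¹ := gt8 e1 e2
  have w2 : t*E*t⁻¹ = A'⁻¹*E*A' := (gt1 e1 e2).symm
  rcases hS with hq2 | hq4
  · -- q2 ∈ S : every letter in sight touches q2
    have hEQ : E ∈ QS S := mem_QS _ (Or.inl hq2)
    have hAQ : A' ∈ QS S := mem_QS _ (Or.inr hq2)
    have hGQ : g ∈ QS S := mem_QS _ (Or.inl hq2)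
    constructor
    · rw [dec2, w2]
      exact mul_mem (mul_mem (mul_mem (mul_mem (inv_mem hAQ) hEQ) hAQ)
        (mul_mem (mul_mem (inv_mem hEQ) hGQ) hEQ))
        (inv_mem (mul_mem (mul_mem (inv_mem hAQ) hEQ) hAQ))
    · rw [dec1, w1]
      refine mul_mem (mul_mem ?_ ?_) (inv_mem ?_)
      · exact mul_mem (mul_mem (mul_mem (mul_mem hEQ hAQ) hEQ) (inv_mem hAQ)) (inv_mem hEQ)
      · exact mul_mem (mul_mem (inv_mem hEQ) hGQ) hEQ
      · exact mul_mem (mul_mem (mul_mem (mul_mem hEQ hAQ) hEQ) (inv_mem hAQ)) (inv_mem hEQ)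
  · -- q4 ∈ S : work inside the subgroup generated by x1, g, x3
    set T : Set (PB n) := {x1, g, x3} with hTset
    have hm1 : x1 ∈ Subgroup.closure T := Subgroup.subset_closure (by simp [hTset])
    have hm2 : g ∈ Subgroup.closure T := Subgroup.subset_closure (by simp [hTset])
    have hm3 : x3 ∈ Subgroup.closure T := Subgroup.subset_closure (by simp [hTset])
    have hle : Subgroup.closure T ≤ QS S := by
      rw [Subgroup.closure_le]
      rintro z hz
      simp only [hTset, Set.mem_insert_iff, Set.mem_singleton_iff] at hz
      rcases hz with rfl | rfl | rfl
      · exact mem_QS _ (Or.inr hq4)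
      · exact mem_QS _ (Or.inr hq4)
      · exact mem_QS _ (Or.inr hq4)
    -- commutations with letters that don't touch q4
    have cEx1 : Commute E x1 := (relB2 h12 h23 h34).symm
    have cAx3 : Commute A' x3 := relB1 h12 h23 h34
    -- conjugation of the generators by E and E⁻¹
    have hEc : ∀ z ∈ T, E * z * E⁻¹ ∈ Subgroup.closure T := by
      rintro z hz
      simp only [hTset, Set.mem_insert_iff, Set.mem_singleton_iff] at hz
      rcases hz with rfl | rfl | rfl
      · rw [conj_eq_of_commute cEx1]; exact hm1
      · rw [(gt2 f1 f2).symm]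
        exact mul_mem (mul_mem (inv_mem hm3) hm2) hm3
      · rw [gt5 f1 f2]
        exact mul_mem (mul_mem (mul_mem (mul_mem (inv_mem hm3) (inv_mem hm2)) hm3) hm2) hm3
    have hEc' : ∀ z ∈ T, E⁻¹ * z * E⁻¹⁻¹ ∈ Subgroup.closure T := by
      rintro z hz
      simp only [hTset, Set.mem_insert_iff, Set.mem_singleton_iff] at hz
      have h0 : (E⁻¹)⁻¹ = E := inv_inv E
      rcases hz with rfl | rfl | rfl
      · rw [h0, conj_eq_of_commute' cEx1]; exact hm1
      · rw [h0, gt6 f1 f2]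
        exact mul_mem (mul_mem (mul_mem (mul_mem hm2 hm3) hm2) (inv_mem hm3)) (inv_mem hm2)
      · rw [h0, gt1 f1 f2]
        exact mul_mem (mul_mem hm2 hm3) (inv_mem hm2)
    -- conjugation of the generators by A' and A'⁻¹
    have hAc : ∀ z ∈ T, A' * z * A'⁻¹ ∈ Subgroup.closure T := by
      rintro z hz
      simp only [hTset, Set.mem_insert_iff, Set.mem_singleton_iff] at hz
      rcases hz with rfl | rfl | rfl
      · rw [(gt2 k1 k2).symm]
        exact mul_mem (mul_mem (inv_mem hm2) hm1) hm2
      · rw [gt5 k1 k2]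
        exact mul_mem (mul_mem (mul_mem (mul_mem (inv_mem hm2) (inv_mem hm1)) hm2) hm1) hm2
      · rw [conj_eq_of_commute cAx3]; exact hm3
    have hAc' : ∀ z ∈ T, A'⁻¹ * z * A'⁻¹⁻¹ ∈ Subgroup.closure T := by
      rintro z hz
      simp only [hTset, Set.mem_insert_iff, Set.mem_singleton_iff] at hz
      have h0 : (A'⁻¹)⁻¹ = A' := inv_inv A'
      rcases hz with rfl | rfl | rfl
      · rw [h0, gt6 k1 k2]
        exact mul_mem (mul_mem (mul_mem (mul_mem hm1 hm2) hm1) (inv_mem hm2)) (inv_mem hm1)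
      · rw [h0, gt1 k1 k2]
        exact mul_mem (mul_mem hm1 hm2) (inv_mem hm1)
      · rw [h0, conj_eq_of_commute' cAx3]; exact hm3
    -- the inner element E⁻¹ g E lies in the subgroup
    have hX : E⁻¹*g*E ∈ Subgroup.closure T := by
      rw [gt6 f1 f2]
      exact mul_mem (mul_mem (mul_mem (mul_mem hm2 hm3) hm2) (inv_mem hm3)) (inv_mem hm2)
    constructor
    · rw [dec2, w2]
      have step :
          (A'⁻¹*E*A') * (E⁻¹*g*E) * (A'⁻¹*E*A')⁻¹
            = A'⁻¹*(E*((A'*(E⁻¹*g*E)*A'⁻¹))*E⁻¹)*A'⁻¹⁻¹ := by group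
      rw [step]
      exact hle (conj_mem_closure hAc' (conj_mem_closure hEc (conj_mem_closure hAc hX)))
    · rw [dec1, w1]
      have step :
          (E*A'*E*A'⁻¹*E⁻¹) * (E⁻¹*g*E) * (E*A'*E*A'⁻¹*E⁻¹)⁻¹
            = E*((A'*((E*((A'⁻¹*((E⁻¹*(E⁻¹*g*E)*E⁻¹⁻¹))*A'⁻¹⁻¹))*E⁻¹))*A'⁻¹))*E⁻¹ := by
        group
      rw [step]
      exact hle (conj_mem_closure hEc (conj_mem_closure hAc (conj_mem_closure hEc
        (conj_mem_closure hAc' (conj_mem_closure hEc' hX)))))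

end PBL

namespace PBL
variable {n : ℕ}

/-- Interleaved case 2: conjugating `p q1 q3` by `p q2 q4`. -/
lemma conj_mem_inter2 (S : Set (Fin n)) {q1 q2 q3 q4 : Fin n}
    (h12 : q1 < q2) (h23 : q2 < q3) (h34 : q3 < q4)
    (hS : q1 ∈ S ∨ q3 ∈ S) :
    p q2 q4 (h23.trans h34) * p q1 q3 (h12.trans h23) * (p q2 q4 (h23.trans h34))⁻¹ ∈ QS S ∧
    (p q2 q4 (h23.trans h34))⁻¹ * p q1 q3 (h12.trans h23) * p q2 q4 (h23.trans h34) ∈ QS S := by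
  set t := p q2 q4 (h23.trans h34) with hT
  set g := p q1 q3 (h12.trans h23) with hG
  set E := p q2 q3 h23 with hE
  set C4 := p q3 q4 h34 with hC4
  set y1 := p q1 q2 h12 with hy1
  set y3 := p q1 q4 (h12.trans (h23.trans h34)) with hy3
  have h := relC h12 h23 h34
  have hcomm : Commute t (E*g*E⁻¹) := by
    unfold Commute SemiconjBy
    calc t*(E*g*E⁻¹) = E*((E⁻¹*t*E)*g)*E⁻¹ := by group
      _ = E*(g*(E⁻¹*t*E))*E⁻¹ := by rw [← h.eq]
      _ = (E*g*E⁻¹)*t := by group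
  have dec1 : t⁻¹*g*t = (t⁻¹*E*t)⁻¹ * (E*g*E⁻¹) * (t⁻¹*E*t) := by
    calc t⁻¹*g*t = (t⁻¹*E*t)⁻¹ * (t⁻¹*(E*g*E⁻¹)*t) * (t⁻¹*E*t) := by group
      _ = (t⁻¹*E*t)⁻¹ * (E*g*E⁻¹) * (t⁻¹*E*t) := by rw [conj_eq_of_commute' hcomm]
  have dec2 : t*g*t⁻¹ = (t*E*t⁻¹)⁻¹ * (E*g*E⁻¹) * (t*E*t⁻¹) := by
    calc t*g*t⁻¹ = (t*E*t⁻¹)⁻¹ * (t*(E*g*E⁻¹)*t⁻¹) * (t*E*t⁻¹) := by group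
      _ = (t*E*t⁻¹)⁻¹ * (E*g*E⁻¹) * (t*E*t⁻¹) := by rw [conj_eq_of_commute hcomm]
  -- triple (q2,q3,q4):  A = E, B = t, C = C4
  have e1 : E*t*C4 = t*C4*E := relA1 h23 h34
  have e2 : E*t*C4 = C4*E*t := relA2 h23 h34
  have w1 : t⁻¹*E*t = C4*E*C4⁻¹ := gt3 e1 e2
  have w2 : t*E*t⁻¹ = E⁻¹*C4⁻¹*E*C4*E := gt7 e1 e2
  -- triple (q1,q2,q3):  A = y1, B = g, C = E
  have f1 : y1*g*E = g*E*y1 := relA1 h12 h23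
  have f2 : y1*g*E = E*y1*g := relA2 h12 h23
  -- triple (q1,q3,q4):  A = g, B = y3, C = C4
  have k1 : g*y3*C4 = y3*C4*g := relA1 (h12.trans h23) h34
  have k2 : g*y3*C4 = C4*g*y3 := relA2 (h12.trans h23) h34
  rcases hS with hq1 | hq3
  · -- q1 ∈ S : closure machinery with generators y1, g, y3
    set T : Set (PB n) := {y1, g, y3} with hTset
    have hm1 : y1 ∈ Subgroup.closure T := Subgroup.subset_closure (by simp [hTset])
    have hm2 : g ∈ Subgroup.closure T := Subgroup.subset_closure (by simp [hTset])
    have hm3 : y3 ∈ Subgroup.closure T := Subgroup.subset_closure (by simp [hTset])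
    have hle : Subgroup.closure T ≤ QS S := by
      rw [Subgroup.closure_le]
      rintro z hz
      simp only [hTset, Set.mem_insert_iff, Set.mem_singleton_iff] at hz
      rcases hz with rfl | rfl | rfl
      · exact mem_QS _ (Or.inl hq1)
      · exact mem_QS _ (Or.inl hq1)
      · exact mem_QS _ (Or.inl hq1)
    have cy3E : Commute y3 E := relB2 h12 h23 h34
    have cy1C4 : Commute y1 C4 := relB1 h12 h23 h34
    have hX : E*g*E⁻¹ ∈ Subgroup.closure T := by
      rw [gt11 f1 f2]
      exact mul_mem (mul_mem (mul_mem (mul_mem (inv_mem hm2) (inv_mem hm1)) hm2) hm1) hm2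
    have hEc : ∀ z ∈ T, E * z * E⁻¹ ∈ Subgroup.closure T := by
      rintro z hz
      simp only [hTset, Set.mem_insert_iff, Set.mem_singleton_iff] at hz
      rcases hz with rfl | rfl | rfl
      · rw [(gt3 f1 f2).symm]
        exact mul_mem (mul_mem (inv_mem hm2) hm1) hm2
      · rw [gt11 f1 f2]
        exact mul_mem (mul_mem (mul_mem (mul_mem (inv_mem hm2) (inv_mem hm1)) hm2) hm1) hm2
      · rw [conj_eq_of_commute cy3E.symm]; exact hm3
    have hEc' : ∀ z ∈ T, E⁻¹ * z * E⁻¹⁻¹ ∈ Subgroup.closure T := by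
      rintro z hz
      simp only [hTset, Set.mem_insert_iff, Set.mem_singleton_iff] at hz
      have h0 : (E⁻¹)⁻¹ = E := inv_inv E
      rcases hz with rfl | rfl | rfl
      · rw [h0, gt10 f1 f2]
        exact mul_mem (mul_mem (mul_mem (mul_mem hm1 hm2) hm1) (inv_mem hm2)) (inv_mem hm1)
      · rw [h0, gt2 f1 f2]
        exact mul_mem (mul_mem hm1 hm2) (inv_mem hm1)
      · rw [h0, conj_eq_of_commute' cy3E.symm]; exact hm3
    have hCc : ∀ z ∈ T, C4 * z * C4⁻¹ ∈ Subgroup.closure T := by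
      rintro z hz
      simp only [hTset, Set.mem_insert_iff, Set.mem_singleton_iff] at hz
      rcases hz with rfl | rfl | rfl
      · rw [conj_eq_of_commute cy1C4.symm]; exact hm1
      · rw [(gt3 k1 k2).symm]
        exact mul_mem (mul_mem (inv_mem hm3) hm2) hm3
      · rw [gt11 k1 k2]
        exact mul_mem (mul_mem (mul_mem (mul_mem (inv_mem hm3) (inv_mem hm2)) hm3) hm2) hm3
    have hCc' : ∀ z ∈ T, C4⁻¹ * z * C4⁻¹⁻¹ ∈ Subgroup.closure T := by
      rintro z hz
      simp only [hTset, Set.mem_insert_iff, Set.mem_singleton_iff] at hz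
      have h0 : (C4⁻¹)⁻¹ = C4 := inv_inv C4
      rcases hz with rfl | rfl | rfl
      · rw [h0, conj_eq_of_commute' cy1C4.symm]; exact hm1
      · rw [h0, gt10 k1 k2]
        exact mul_mem (mul_mem (mul_mem (mul_mem hm2 hm3) hm2) (inv_mem hm3)) (inv_mem hm2)
      · rw [h0, gt2 k1 k2]
        exact mul_mem (mul_mem hm2 hm3) (inv_mem hm2)
    constructor
    · rw [dec2, w2]
      have step :
          (E⁻¹*C4⁻¹*E*C4*E)⁻¹ * (E*g*E⁻¹) * (E⁻¹*C4⁻¹*E*C4*E)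
            = E⁻¹*((C4⁻¹*((E⁻¹*((C4*((E*(E*g*E⁻¹)*E⁻¹))*C4⁻¹))*E⁻¹⁻¹))*C4⁻¹⁻¹))*E⁻¹⁻¹ := by
        group
      rw [step]
      exact hle (conj_mem_closure hEc' (conj_mem_closure hCc' (conj_mem_closure hEc'
        (conj_mem_closure hCc (conj_mem_closure hEc hX)))))
    · rw [dec1, w1]
      have step :
          (C4*E*C4⁻¹)⁻¹ * (E*g*E⁻¹) * (C4*E*C4⁻¹)
            = C4*((E⁻¹*((C4⁻¹*(E*g*E⁻¹)*C4⁻¹⁻¹))*E⁻¹⁻¹))*C4⁻¹ := by group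
      rw [step]
      exact hle (conj_mem_closure hCc (conj_mem_closure hEc' (conj_mem_closure hCc' hX)))
  · -- q3 ∈ S : everything touches q3
    have hEQ : E ∈ QS S := mem_QS _ (Or.inr hq3)
    have hCQ : C4 ∈ QS S := mem_QS _ (Or.inl hq3)
    have hGQ : g ∈ QS S := mem_QS _ (Or.inr hq3)
    have hXQ : E*g*E⁻¹ ∈ QS S := mul_mem (mul_mem hEQ hGQ) (inv_mem hEQ)
    constructor
    · rw [dec2, w2]
      have hwQ : E⁻¹*C4⁻¹*E*C4*E ∈ QS S :=
        mul_mem (mul_mem (mul_mem (mul_mem (inv_mem hEQ) (inv_mem hCQ)) hEQ) hCQ) hEQ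
      exact mul_mem (mul_mem (inv_mem hwQ) hXQ) hwQ
    · rw [dec1, w1]
      have hwQ : C4*E*C4⁻¹ ∈ QS S := mul_mem (mul_mem hCQ hEQ) (inv_mem hCQ)
      exact mul_mem (mul_mem (inv_mem hwQ) hXQ) hwQ

end PBL

namespace PBL
variable {n : ℕ}

/-- Conjugating a generator touching `S` by any generator stays in `Q_S`. -/
lemma conj_mem (S : Set (Fin n)) {a b x y : Fin n} (hab : a < b) (hxy : x < y)
    (hS : a ∈ S ∨ b ∈ S) :
    p x y hxy * p a b hab * (p x y hxy)⁻¹ ∈ QS S ∧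
    (p x y hxy)⁻¹ * p a b hab * p x y hxy ∈ QS S := by
  by_cases hx : x ∈ S ∨ y ∈ S
  · have h1 := mem_QS hxy hx
    have h2 := mem_QS hab hS
    exact ⟨mul_mem (mul_mem h1 h2) (inv_mem h1),
      mul_mem (mul_mem (inv_mem h1) h2) h1⟩
  push_neg at hx
  obtain ⟨hxS, hyS⟩ := hx
  rcases lt_trichotomy b x with hbx | hbx | hbx
  · -- b < x : disjoint, separated
    have hc : Commute (p x y hxy) (p a b hab) := (relB1 hab hbx hxy).symm
    rw [conj_eq_of_commute hc, conj_eq_of_commute' hc]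
    exact ⟨mem_QS hab hS, mem_QS hab hS⟩
  · -- b = x : shared index, triple (a, b, y)
    subst hbx
    have haS : a ∈ S := hS.resolve_right hxS
    have h1 := relA1 hab hxy
    have h2 := relA2 hab hxy
    have hA := mem_QS hab (Or.inl haS)
    have hB := mem_QS (hab.trans hxy) (Or.inl haS)
    constructor
    · rw [(gt3 h1 h2).symm]
      exact mul_mem (mul_mem (inv_mem hB) hA) hB
    · rw [gt10 h1 h2]
      exact mul_mem (mul_mem (mul_mem (mul_mem hA hB) hA) (inv_mem hB)) (inv_mem hA)
  · rcases lt_trichotomy y a with hya | hya | hya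
    · -- y < a : disjoint, separated
      have hc : Commute (p x y hxy) (p a b hab) := relB1 hxy hya hab
      rw [conj_eq_of_commute hc, conj_eq_of_commute' hc]
      exact ⟨mem_QS hab hS, mem_QS hab hS⟩
    · -- y = a : shared index, triple (x, a, b)
      subst hya
      have hbS : b ∈ S := hS.resolve_left hyS
      have h1 := relA1 hxy hab
      have h2 := relA2 hxy hab
      have hC := mem_QS hab (Or.inr hbS)
      have hB := mem_QS (hxy.trans hab) (Or.inr hbS)
      constructor
      · rw [gt5 h1 h2]
        exact mul_mem (mul_mem (mul_mem (mul_mem (inv_mem hC) (inv_mem hB)) hC) hB) hC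
      · rw [gt1 h1 h2]
        exact mul_mem (mul_mem hB hC) (inv_mem hB)
    · -- now x < b and a < y
      rcases lt_trichotomy a x with hax | hax | hax
      · rcases lt_trichotomy b y with hby | hby | hby
        · -- a < x < b < y : interleaved
          exact conj_mem_inter2 S hax hbx hby hS
        · -- b = y : shared index, a < x, triple (a, x, b)
          subst hby
          have haS : a ∈ S := hS.resolve_right hyS
          have h1 := relA1 hax hbx
          have h2 := relA2 hax hbx
          have hA := mem_QS hax (Or.inl haS)
          have hB := mem_QS hab (Or.inl haS)
          constructor
          · rw [gt11 h1 h2]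
            exact mul_mem (mul_mem (mul_mem (mul_mem (inv_mem hB) (inv_mem hA)) hB) hA) hB
          · rw [gt2 h1 h2]
            exact mul_mem (mul_mem hA hB) (inv_mem hA)
        · -- a < x < y < b : nested
          have hc : Commute (p x y hxy) (p a b hab) := (relB2 hax hxy hby).symm
          rw [conj_eq_of_commute hc, conj_eq_of_commute' hc]
          exact ⟨mem_QS hab hS, mem_QS hab hS⟩
      · -- a = x : shared index
        subst hax
        have hbS : b ∈ S := hS.resolve_left hxS
        rcases lt_trichotomy b y with hby | hby | hby
        · -- triple (a, b, y), conjugator B = p a y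
          have h1 := relA1 hab hby
          have h2 := relA2 hab hby
          have hA := mem_QS hab (Or.inr hbS)
          have hC := mem_QS hby (Or.inl hbS)
          constructor
          · rw [gt7 h1 h2]
            exact mul_mem (mul_mem (mul_mem (mul_mem (inv_mem hA) (inv_mem hC)) hA) hC) hA
          · rw [gt3 h1 h2]
            exact mul_mem (mul_mem hC hA) (inv_mem hC)
        · -- b = y : same generator
          subst hby
          exact absurd hS (by simp [hxS, hyS])
        · -- y < b : triple (x, y, b), conjugator A = p x y
          have h1 := relA1 hxy hby
          have h2 := relA2 hxy hby
          have hB := mem_QS hab (Or.inr hbS)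
          have hC := mem_QS hby (Or.inr hbS)
          constructor
          · rw [(gt2 h1 h2).symm]
            exact mul_mem (mul_mem (inv_mem hC) hB) hC
          · rw [gt6 h1 h2]
            exact mul_mem (mul_mem (mul_mem (mul_mem hB hC) hB) (inv_mem hC)) (inv_mem hB)
      · -- x < a
        rcases lt_trichotomy b y with hby | hby | hby
        · -- x < a < b < y?? need a < b < y with x < a : nested
          have hc : Commute (p x y hxy) (p a b hab) := relB2 hax hab hby
          rw [conj_eq_of_commute hc, conj_eq_of_commute' hc]
          exact ⟨mem_QS hab hS, mem_QS hab hS⟩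
        · -- b = y : shared index, x < a, triple (x, a, b)
          subst hby
          have haS : a ∈ S := hS.resolve_right hyS
          have h1 := relA1 hax hab
          have h2 := relA2 hax hab
          have hA := mem_QS hax (Or.inr haS)
          have hC := mem_QS hab (Or.inl haS)
          constructor
          · rw [(gt1 h1 h2).symm]
            exact mul_mem (mul_mem (inv_mem hA) hC) hA
          · rw [gt8 h1 h2]
            exact mul_mem (mul_mem (mul_mem (mul_mem hC hA) hC) (inv_mem hA)) (inv_mem hC)
        · -- x < a < y < b : interleaved
          exact conj_mem_inter1 S hax hya hby hS

end PBL

namespace PBL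
variable {n : ℕ}

attribute [local instance] Classical.propDecidable

lemma conj_QS_mem (S : Set (Fin n)) {a b : Fin n} (h : a < b) :
    ∀ {z : PB n}, z ∈ QS S → p a b h * z * (p a b h)⁻¹ ∈ QS S := by
  intro z hz
  refine conj_mem_closure ?_ hz
  rintro g ⟨a', b', h', hS', rfl⟩
  exact (conj_mem S h' h hS').1

lemma conj_QS_mem' (S : Set (Fin n)) {a b : Fin n} (h : a < b) :
    ∀ {z : PB n}, z ∈ QS S → (p a b h)⁻¹ * z * p a b h ∈ QS S := by
  intro z hz
  have key : ∀ g ∈ {x : PB n | ∃ (a' b' : Fin n) (h' : a' < b'), (a' ∈ S ∨ b' ∈ S) ∧ x = p a' b' h'},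
      (p a b h)⁻¹ * g * ((p a b h)⁻¹)⁻¹ ∈ QS S := by
    rintro g ⟨a', b', h', hS', rfl⟩
    rw [inv_inv]
    exact (conj_mem S h' h hS').2
  have := conj_mem_closure key hz
  rwa [inv_inv] at this

lemma QS_normal (S : Set (Fin n)) : (QS S).Normal := by
  rw [← Subgroup.normalizer_eq_top_iff]
  rw [Subgroup.eq_top_iff']
  intro x
  refine PresentedGroup.generated_by _ _ ?_ x
  rintro ⟨⟨a, b⟩, hab⟩
  show p a b hab ∈ Subgroup.normalizer (QS S : Set (PB n))
  rw [Subgroup.mem_normalizer_iff]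
  intro z
  constructor
  · intro hz
    exact conj_QS_mem S hab hz
  · intro hz
    have h2 := conj_QS_mem' S hab hz
    rwa [show (p a b hab)⁻¹ * (p a b hab * z * (p a b hab)⁻¹) * p a b hab = z by group] at h2

/-- The retraction `φ_S` killing all generators touching `S`. -/
noncomputable def phi (S : Set (Fin n)) : PB n →* PB n :=
  PresentedGroup.toGroup
    (f := fun q : {q : Fin n × Fin n // q.1 < q.2} =>
      if q.1.1 ∈ S ∨ q.1.2 ∈ S then 1 else p q.1.1 q.1.2 q.2)
    (by
      rintro r (((( ⟨a,b,c,hab,hbc,rfl⟩ | ⟨a,b,c,hab,hbc,rfl⟩ ) | ⟨a,b,c,d,hab,hbc,hcd,rfl⟩ )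
        | ⟨a,b,c,d,hab,hbc,hcd,rfl⟩ ) | ⟨a,b,c,d,hab,hbc,hcd,rfl⟩ )
      · simp only [map_mul, map_inv, pf, FreeGroup.lift_apply_of]
        by_cases ha : a ∈ S <;> by_cases hb : b ∈ S <;> by_cases hc : c ∈ S <;>
          simp only [ha, hb, hc, or_true, true_or, or_false, false_or, if_true, if_false,
            one_mul, mul_one, inv_one, or_self] <;>
          first
            | (rw [relA1 hab hbc]; group)
            | group
      · simp only [map_mul, map_inv, pf, FreeGroup.lift_apply_of]
        by_cases ha : a ∈ S <;> by_cases hb : b ∈ S <;> by_cases hc : c ∈ S <;>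
          simp only [ha, hb, hc, or_true, true_or, or_false, false_or, if_true, if_false,
            one_mul, mul_one, inv_one, or_self] <;>
          first
            | (rw [relA2 hab hbc]; group)
            | group
      · simp only [map_mul, map_inv, pf, FreeGroup.lift_apply_of]
        by_cases ha : a ∈ S <;> by_cases hb : b ∈ S <;> by_cases hc : c ∈ S <;>
          by_cases hd : d ∈ S <;>
          simp only [ha, hb, hc, hd, or_true, true_or, or_false, false_or, if_true, if_false,
            one_mul, mul_one, inv_one, or_self] <;>
          first
            | (rw [(relB1 hab hbc hcd).eq]; group)
            | group
      · simp only [map_mul, map_inv, pf, FreeGroup.lift_apply_of]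
        by_cases ha : a ∈ S <;> by_cases hb : b ∈ S <;> by_cases hc : c ∈ S <;>
          by_cases hd : d ∈ S <;>
          simp only [ha, hb, hc, hd, or_true, true_or, or_false, false_or, if_true, if_false,
            one_mul, mul_one, inv_one, or_self] <;>
          first
            | (rw [(relB2 hab hbc hcd).eq]; group)
            | group
      · simp only [map_mul, map_inv, pf, FreeGroup.lift_apply_of]
        by_cases ha : a ∈ S <;> by_cases hb : b ∈ S <;> by_cases hc : c ∈ S <;>
          by_cases hd : d ∈ S <;>
          simp only [ha, hb, hc, hd, or_true, true_or, or_false, false_or, if_true, if_false,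
            one_mul, mul_one, inv_one, or_self] <;>
          first
            | (rw [(relC hab hbc hcd).eq]; group)
            | group)

lemma phi_p (S : Set (Fin n)) {a b : Fin n} (h : a < b) :
    phi S (p a b h) = if a ∈ S ∨ b ∈ S then 1 else p a b h :=
  PresentedGroup.toGroup.of _

lemma phi_p_one {S : Set (Fin n)} {a b : Fin n} (h : a < b) (hS : a ∈ S ∨ b ∈ S) :
    phi S (p a b h) = 1 := by rw [phi_p, if_pos hS]

lemma phi_p_self {S : Set (Fin n)} {a b : Fin n} (h : a < b) (hS : ¬(a ∈ S ∨ b ∈ S)) :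
    phi S (p a b h) = p a b h := by rw [phi_p, if_neg hS]

lemma QS_le_ker (S : Set (Fin n)) : QS S ≤ (phi S).ker := by
  rw [QS, Subgroup.closure_le]
  rintro g ⟨a, b, h, hS, rfl⟩
  exact phi_p_one h hS

lemma phi_fix_PS {S T : Set (Fin n)} (hdisj : T ∩ S = ∅) :
    ∀ {z : PB n}, z ∈ PS T → phi S z = z := by
  intro z hz
  have : PS T ≤ (phi S).eqLocus (MonoidHom.id _) := by
    rw [PS, Subgroup.closure_le]
    rintro g ⟨a, b, h, haT, hbT, rfl⟩
    have hna : a ∉ S := fun haS => (Set.eq_empty_iff_forall_notMem.mp hdisj a) ⟨haT, haS⟩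
    have hnb : b ∉ S := fun hbS => (Set.eq_empty_iff_forall_notMem.mp hdisj b) ⟨hbT, hbS⟩
    show phi S (p a b h) = p a b h
    exact phi_p_self h (by simp [hna, hnb])
  exact this hz

end PBL

namespace PBL
variable {n : ℕ}

/-- Exponent-sum homomorphism detecting the generator `p_{a,b}`. -/
noncomputable def eps (a b : Fin n) : PB n →* Multiplicative ℤ :=
  PresentedGroup.toGroup
    (f := fun q : {q : Fin n × Fin n // q.1 < q.2} =>
      Multiplicative.ofAdd (if q.1.1 = a ∧ q.1.2 = b then (1 : ℤ) else 0))
    (by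
      rintro r (((( ⟨a',b',c',hab,hbc,rfl⟩ | ⟨a',b',c',hab,hbc,rfl⟩ )
        | ⟨a',b',c',d',hab,hbc,hcd,rfl⟩ ) | ⟨a',b',c',d',hab,hbc,hcd,rfl⟩ )
        | ⟨a',b',c',d',hab,hbc,hcd,rfl⟩ ) <;>
      · simp only [map_mul, map_inv, pf, FreeGroup.lift_apply_of]
        rw [inv_mul_eq_one]
        simp only [mul_comm, mul_left_comm, mul_assoc])

lemma eps_p (a b : Fin n) {x y : Fin n} (h : x < y) :
    eps a b (p x y h) = Multiplicative.ofAdd (if x = a ∧ y = b then (1 : ℤ) else 0) :=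
  PresentedGroup.toGroup.of _

lemma mem_PS_indices {T : Set (Fin n)} {a b : Fin n} (h : a < b)
    (hm : p a b h ∈ PS T) : a ∈ T ∧ b ∈ T := by
  by_contra hcon
  have key : eps a b (p a b h) = 1 := by
    have hle : PS T ≤ (eps a b).ker := by
      rw [PS, Subgroup.closure_le]
      rintro g ⟨x, y, hxy, hxT, hyT, rfl⟩
      have : ¬(x = a ∧ y = b) := by
        rintro ⟨rfl, rfl⟩
        exact hcon ⟨hxT, hyT⟩
      show eps a b (p x y hxy) = 1
      rw [eps_p, if_neg this, ofAdd_zero]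
    exact hle hm
  rw [eps_p, if_pos ⟨rfl, rfl⟩] at key
  have : (1 : ℤ) = 0 := by simpa using congrArg Multiplicative.toAdd key
  exact one_ne_zero this

lemma p_mem_PS {T : Set (Fin n)} {a b : Fin n} (h : a < b) (ha : a ∈ T) (hb : b ∈ T) :
    p a b h ∈ PS T :=
  Subgroup.subset_closure ⟨a, b, h, ha, hb, rfl⟩

lemma PS_mono {T T' : Set (Fin n)} (hT : T ⊆ T') : PS T ≤ PS T' := by
  rw [PS, Subgroup.closure_le]
  rintro g ⟨a, b, h, ha, hb, rfl⟩
  exact p_mem_PS h (hT ha) (hT hb)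

lemma support_p {a b : Fin n} (h : a < b) : support (p a b h) = {a, b} := by
  apply subset_antisymm
  · exact Set.sInter_subset_of_mem
      (p_mem_PS h (Set.mem_insert _ _) (Set.mem_insert_of_mem _ rfl))
  · intro s hs
    rw [support, Set.mem_sInter]
    intro T hT
    obtain ⟨haT, hbT⟩ := mem_PS_indices h hT
    rcases hs with rfl | hs
    · exact haT
    · rwa [Set.mem_singleton_iff.mp hs]

lemma support_inv (x : PB n) : support x⁻¹ = support x := by
  have hset : {S : Set (Fin n) | x⁻¹ ∈ PS S} = {S | x ∈ PS S} := by
    ext T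
    simp only [Set.mem_setOf_eq]
    exact inv_mem_iff
  unfold support
  rw [hset]

lemma mem_PS_support_p {a b : Fin n} (h : a < b) : p a b h ∈ PS (support (p a b h)) := by
  rw [support_p]
  exact p_mem_PS h (Set.mem_insert _ _) (Set.mem_insert_of_mem _ rfl)

/-- Master lemma for monic commutators. -/
lemma monic_master {x : PB n} (hx : IsMonic x) :
    x ∈ PS (support x) ∧
      ∀ S : Set (Fin n),
        (support x ∩ S ≠ ∅ → phi S x = 1) ∧ (support x ∩ S = ∅ → phi S x = x) := by
  induction hx with
  | of a b h =>
    refine ⟨mem_PS_support_p h, fun S => ⟨?_, ?_⟩⟩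
    · intro hne
      rw [support_p] at hne
      have : a ∈ S ∨ b ∈ S := by
        rcases Set.nonempty_iff_ne_empty.mpr hne with ⟨s, hs1, hs2⟩
        rcases hs1 with rfl | hs1
        · exact Or.inl hs2
        · rw [Set.mem_singleton_iff.mp hs1] at hs2; exact Or.inr hs2
      exact phi_p_one h this
    · intro hemp
      rw [support_p] at hemp
      refine phi_p_self h ?_
      rintro (haS | hbS)
      · exact (Set.eq_empty_iff_forall_notMem.mp hemp a) ⟨by simp, haS⟩
      · exact (Set.eq_empty_iff_forall_notMem.mp hemp b) ⟨by simp, hbS⟩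
  | inv a b h =>
    rw [support_inv]
    refine ⟨inv_mem (mem_PS_support_p h), fun S => ⟨?_, ?_⟩⟩
    · intro hne
      rw [support_p] at hne
      have : a ∈ S ∨ b ∈ S := by
        rcases Set.nonempty_iff_ne_empty.mpr hne with ⟨s, hs1, hs2⟩
        rcases hs1 with rfl | hs1
        · exact Or.inl hs2
        · rw [Set.mem_singleton_iff.mp hs1] at hs2; exact Or.inr hs2
      rw [map_inv, phi_p_one h this, inv_one]
    · intro hemp
      rw [support_p] at hemp
      rw [map_inv, phi_p_self h ?_]
      rintro (haS | hbS)
      · exact (Set.eq_empty_iff_forall_notMem.mp hemp a) ⟨by simp, haS⟩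
      · exact (Set.eq_empty_iff_forall_notMem.mp hemp b) ⟨by simp, hbS⟩
  | comm u v hu hv hne ihu ihv =>
    set g := u⁻¹ * v⁻¹ * u * v with hg
    have hsub : g ∈ PS (support u ∪ support v) := by
      have h1 : u ∈ PS (support u ∪ support v) :=
        PS_mono Set.subset_union_left ihu.1
      have h2 : v ∈ PS (support u ∪ support v) :=
        PS_mono Set.subset_union_right ihv.1
      exact mul_mem (mul_mem (mul_mem (inv_mem h1) (inv_mem h2)) h1) h2
    have hsupp : support g = support u ∪ support v := by
      apply subset_antisymm
      · exact Set.sInter_subset_of_mem hsub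
      · intro s hs
        rw [support, Set.mem_sInter]
        intro T hT
        by_contra hsT
        have hfix : phi Tᶜ g = g := phi_fix_PS (by simp) hT
        have hkill : phi Tᶜ g = 1 := by
          rcases hs with hsu | hsv
          · have h1 : support u ∩ Tᶜ ≠ ∅ :=
              Set.nonempty_iff_ne_empty.mp ⟨s, hsu, hsT⟩
            have := (ihu.2 Tᶜ).1 h1
            simp only [hg, map_mul, map_inv, this, inv_one, one_mul, mul_one]
            group
          · have h1 : support v ∩ Tᶜ ≠ ∅ :=
              Set.nonempty_iff_ne_empty.mp ⟨s, hsv, hsT⟩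
            have := (ihv.2 Tᶜ).1 h1
            simp only [hg, map_mul, map_inv, this, inv_one, one_mul, mul_one]
            group
        rw [hfix] at hkill
        exact hne hkill
    refine ⟨by rw [hsupp]; exact hsub, fun S => ⟨?_, ?_⟩⟩
    · intro hneS
      rw [hsupp] at hneS
      have : support u ∩ S ≠ ∅ ∨ support v ∩ S ≠ ∅ := by
        rcases Set.nonempty_iff_ne_empty.mpr hneS with ⟨s, hs1, hs2⟩
        rcases hs1 with hs1 | hs1
        · exact Or.inl (Set.nonempty_iff_ne_empty.mp ⟨s, hs1, hs2⟩)
        · exact Or.inr (Set.nonempty_iff_ne_empty.mp ⟨s, hs1, hs2⟩)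
      rcases this with h1 | h1
      · have := (ihu.2 S).1 h1
        simp only [hg, map_mul, map_inv, this, inv_one, one_mul, mul_one]
        group
      · have := (ihv.2 S).1 h1
        simp only [hg, map_mul, map_inv, this, inv_one, one_mul, mul_one]
        group
    · intro hempS
      rw [hsupp, Set.union_inter_distrib_right, Set.union_empty_iff] at hempS
      obtain ⟨h1, h2⟩ := hempS
      have e1 := (ihu.2 S).2 h1
      have e2 := (ihv.2 S).2 h2
      simp only [hg, map_mul, map_inv, e1, e2]

end PBL

namespace PBL
variable {n : ℕ}

lemma pair_inter {S : Set (Fin n)} {a b : Fin n} (h : ({a, b} : Set (Fin n)) ∩ S ≠ ∅) :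
    a ∈ S ∨ b ∈ S := by
  rcases Set.nonempty_iff_ne_empty.mpr h with ⟨s, hs1, hs2⟩
  rcases hs1 with rfl | hs1
  · exact Or.inl hs2
  · rw [Set.mem_singleton_iff.mp hs1] at hs2
    exact Or.inr hs2

lemma support_comm {u v : PB n} (hu : IsMonic u) (hv : IsMonic v)
    (hne : u⁻¹ * v⁻¹ * u * v ≠ 1) :
    support (u⁻¹ * v⁻¹ * u * v) = support u ∪ support v := by
  obtain ⟨hu1, hu2⟩ := monic_master hu
  obtain ⟨hv1, hv2⟩ := monic_master hv
  have hsub : u⁻¹ * v⁻¹ * u * v ∈ PS (support u ∪ support v) := by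
    have h1 : u ∈ PS (support u ∪ support v) := PS_mono Set.subset_union_left hu1
    have h2 : v ∈ PS (support u ∪ support v) := PS_mono Set.subset_union_right hv1
    exact mul_mem (mul_mem (mul_mem (inv_mem h1) (inv_mem h2)) h1) h2
  apply subset_antisymm
  · exact Set.sInter_subset_of_mem hsub
  · intro s hs
    rw [support, Set.mem_sInter]
    intro T hT
    by_contra hsT
    have hfix : phi Tᶜ (u⁻¹ * v⁻¹ * u * v) = u⁻¹ * v⁻¹ * u * v := phi_fix_PS (by simp) hT
    have hkill : phi Tᶜ (u⁻¹ * v⁻¹ * u * v) = 1 := by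
      rcases hs with hsu | hsv
      · have h1 : support u ∩ Tᶜ ≠ ∅ := Set.nonempty_iff_ne_empty.mp ⟨s, hsu, hsT⟩
        have := (hu2 Tᶜ).1 h1
        simp only [map_mul, map_inv, this, inv_one, one_mul, mul_one]
        group
      · have h1 : support v ∩ Tᶜ ≠ ∅ := Set.nonempty_iff_ne_empty.mp ⟨s, hsv, hsT⟩
        have := (hv2 Tᶜ).1 h1
        simp only [map_mul, map_inv, this, inv_one, one_mul, mul_one]
        group
    rw [hfix] at hkill
    exact hne hkill

lemma monic_inv {x : PB n} (hx : IsMonic x) : IsMonic x⁻¹ := by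
  induction hx with
  | of a b h => exact IsMonic.inv a b h
  | inv a b h => rw [inv_inv]; exact IsMonic.of a b h
  | comm u v hu hv hne ihu ihv =>
    rw [show (u⁻¹ * v⁻¹ * u * v)⁻¹ = v⁻¹ * u⁻¹ * v * u by group]
    refine IsMonic.comm v u hv hu ?_
    rw [show v⁻¹ * u⁻¹ * v * u = (u⁻¹ * v⁻¹ * u * v)⁻¹ by group]
    exact inv_ne_one.mpr hne

lemma monic_mem_QS {x : PB n} (hx : IsMonic x) :
    ∀ {S : Set (Fin n)}, support x ∩ S ≠ ∅ → x ∈ QS S := by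
  induction hx with
  | of a b h =>
    intro S hS
    rw [support_p] at hS
    exact mem_QS h (pair_inter hS)
  | inv a b h =>
    intro S hS
    rw [support_inv, support_p] at hS
    exact inv_mem (mem_QS h (pair_inter hS))
  | comm u v hu hv hne ihu ihv =>
    intro S hS
    rw [support_comm hu hv hne] at hS
    rcases Set.nonempty_iff_ne_empty.mpr hS with ⟨s, hs1, hs2⟩
    rcases hs1 with hs1 | hs1
    · have hu' : u ∈ QS S := ihu (Set.nonempty_iff_ne_empty.mp ⟨s, hs1, hs2⟩)
      rw [show u⁻¹ * v⁻¹ * u * v = u⁻¹ * (v⁻¹ * u * (v⁻¹)⁻¹) by group]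
      exact mul_mem (inv_mem hu') ((QS_normal S).conj_mem u hu' v⁻¹)
    · have hv' : v ∈ QS S := ihv (Set.nonempty_iff_ne_empty.mp ⟨s, hs1, hs2⟩)
      rw [show u⁻¹ * v⁻¹ * u * v = (u⁻¹ * v⁻¹ * (u⁻¹)⁻¹) * v by group]
      exact mul_mem ((QS_normal S).conj_mem v⁻¹ (inv_mem hv') u⁻¹) hv'

lemma main_aux : ∀ (m : ℕ) (S : Fin m → Set (Fin n)),
    (⨅ i, QS (S i)) ≤
      Subgroup.closure {x : PB n | IsMonic x ∧ ∀ i, support x ∩ S i ≠ ∅} := by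
  intro m
  induction m with
  | zero =>
    intro S x _
    refine PresentedGroup.generated_by _ _ ?_ x
    rintro ⟨⟨a, b⟩, h⟩
    exact Subgroup.subset_closure ⟨IsMonic.of a b h, fun i => i.elim0⟩
  | succ m ih =>
    intro S x hx
    set T := S (Fin.last m) with hTdef
    set Kset := {x : PB n | IsMonic x ∧ ∀ i : Fin (m + 1), support x ∩ S i ≠ ∅} with hKset
    set Hset := {x : PB n | IsMonic x ∧ ∀ i : Fin m, support x ∩ S i.castSucc ≠ ∅} with hHset
    set K := Subgroup.closure Kset with hK
    set H := Subgroup.closure Hset with hH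
    have hxH : x ∈ H := ih (fun i => S i.castSucc)
      (Subgroup.mem_iInf.mpr fun i => Subgroup.mem_iInf.mp hx i.castSucc)
    have hxT : phi T x = 1 := QS_le_ker T (Subgroup.mem_iInf.mp hx (Fin.last m))
    -- conjugates of K-generators by H-generators stay in K
    have hconj : ∀ h ∈ Hset, ∀ g ∈ Kset, h * g * h⁻¹ ∈ K ∧ h⁻¹ * g * h ∈ K := by
      rintro h ⟨hmon, hsup⟩ g ⟨gmon, gsup⟩
      have hgK : g ∈ K := Subgroup.subset_closure ⟨gmon, gsup⟩
      constructor
      · by_cases hone : g⁻¹ * (h⁻¹)⁻¹ * g * h⁻¹ = 1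
        · rw [show h * g * h⁻¹ = g * (g⁻¹ * (h⁻¹)⁻¹ * g * h⁻¹) by group, hone, mul_one]
          exact hgK
        · have cmon : IsMonic (g⁻¹ * (h⁻¹)⁻¹ * g * h⁻¹) :=
            IsMonic.comm g h⁻¹ gmon (monic_inv hmon) hone
          have csup : ∀ i : Fin (m + 1),
              support (g⁻¹ * (h⁻¹)⁻¹ * g * h⁻¹) ∩ S i ≠ ∅ := by
            intro i
            rw [support_comm gmon (monic_inv hmon) hone]
            rcases Set.nonempty_iff_ne_empty.mpr (gsup i) with ⟨s, hs1, hs2⟩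
            exact Set.nonempty_iff_ne_empty.mp ⟨s, Or.inl hs1, hs2⟩
          rw [show h * g * h⁻¹ = g * (g⁻¹ * (h⁻¹)⁻¹ * g * h⁻¹) by group]
          exact mul_mem hgK (Subgroup.subset_closure ⟨cmon, csup⟩)
      · by_cases hone : g⁻¹ * h⁻¹ * g * h = 1
        · rw [show h⁻¹ * g * h = g * (g⁻¹ * h⁻¹ * g * h) by group, hone, mul_one]
          exact hgK
        · have cmon : IsMonic (g⁻¹ * h⁻¹ * g * h) := IsMonic.comm g h gmon hmon hone
          have csup : ∀ i : Fin (m + 1), support (g⁻¹ * h⁻¹ * g * h) ∩ S i ≠ ∅ := by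
            intro i
            rw [support_comm gmon hmon hone]
            rcases Set.nonempty_iff_ne_empty.mpr (gsup i) with ⟨s, hs1, hs2⟩
            exact Set.nonempty_iff_ne_empty.mp ⟨s, Or.inl hs1, hs2⟩
          rw [show h⁻¹ * g * h = g * (g⁻¹ * h⁻¹ * g * h) by group]
          exact mul_mem hgK (Subgroup.subset_closure ⟨cmon, csup⟩)
    have hHnorm : H ≤ Subgroup.normalizer (K : Set (PB n)) := by
      rw [hH, Subgroup.closure_le]
      intro h hh
      rw [SetLike.mem_coe, Subgroup.mem_normalizer_iff]
      intro z
      constructor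
      · intro hz
        exact conj_mem_closure (fun g hg => (hconj h hh g hg).1) hz
      · intro hz
        have key : ∀ g ∈ Kset, h⁻¹ * g * (h⁻¹)⁻¹ ∈ K := by
          intro g hg
          rw [inv_inv]
          exact (hconj h hh g hg).2
        have := conj_mem_closure key hz
        rwa [show h⁻¹ * (h * z * h⁻¹) * (h⁻¹)⁻¹ = z by group] at this
    -- main claim by closure induction
    have claim : ∀ z, z ∈ H → z * (phi T z)⁻¹ ∈ K ∧ phi T z ∈ H := by
      intro z hz
      induction hz using Subgroup.closure_induction with
      | mem g hg =>
        obtain ⟨gmon, gsup⟩ := hg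
        by_cases ht : support g ∩ T ≠ ∅
        · have h1 : phi T g = 1 := ((monic_master gmon).2 T).1 ht
          rw [h1]
          constructor
          · rw [inv_one, mul_one]
            refine Subgroup.subset_closure ⟨gmon, fun i => ?_⟩
            refine Fin.lastCases ?_ ?_ i
            · exact ht
            · exact gsup
          · exact one_mem H
        · push_neg at ht
          have h1 : phi T g = g := ((monic_master gmon).2 T).2 ht
          rw [h1]
          exact ⟨by rw [mul_inv_cancel]; exact one_mem K, Subgroup.subset_closure ⟨gmon, gsup⟩⟩
      | one =>
        rw [map_one]
        exact ⟨by rw [inv_one, mul_one]; exact one_mem K, one_mem H⟩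
      | mul z1 z2 hz1 hz2 ih1 ih2 =>
        obtain ⟨k1, m1⟩ := ih1
        obtain ⟨k2, m2⟩ := ih2
        constructor
        · rw [map_mul, show z1 * z2 * (phi T z1 * phi T z2)⁻¹
            = z1 * (z2 * (phi T z2)⁻¹) * z1⁻¹ * (z1 * (phi T z1)⁻¹) by group]
          exact mul_mem ((Subgroup.mem_normalizer_iff.mp (hHnorm hz1) _).mp k2) k1
        · rw [map_mul]
          exact mul_mem m1 m2
      | inv z hz ihz =>
        obtain ⟨k, mh⟩ := ihz
        constructor
        · rw [map_inv, show z⁻¹ * ((phi T z)⁻¹)⁻¹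
            = (phi T z)⁻¹ * (z * (phi T z)⁻¹)⁻¹ * ((phi T z)⁻¹)⁻¹ by group]
          exact (Subgroup.mem_normalizer_iff.mp (inv_mem (hHnorm mh)) _).mp (inv_mem k)
        · rw [map_inv]
          exact inv_mem mh
    obtain ⟨hk, -⟩ := claim x hxH
    rw [hxT, inv_one, mul_one] at hk
    exact hk

end PBL

/-- Theorem 2.1: `Q_{S_1} ∩ ⋯ ∩ Q_{S_m}` is generated by the
monic commutators `x` with `σ(x) ∩ S_i ≠ ∅` for all `i`. -/
theorem inf_QS_eq_closure (n m : ℕ) (hn : 0 < n) (S : Fin m → Set (Fin n)) :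
    (⨅ i, QS (S i)) =
      Subgroup.closure {x : PB n | IsMonic x ∧ ∀ i, support x ∩ S i ≠ ∅} := by
  apply le_antisymm
  · exact PBL.main_aux m S
  · rw [Subgroup.closure_le]
    rintro x ⟨hmon, hsup⟩
    rw [SetLike.mem_coe, Subgroup.mem_iInf]
    intro i
    exact PBL.monic_mem_QS hmon (hsup i)
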